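/- arXiv:2206.08318 — 5 statements merged into one kernel-verified Lean document; each statement's English description precedes it below -/
import Mathlib

section
/- Let d, v_p, v_e be real numbers with d > 0 and 0 < v_p < v_e, and let θ ∈ [0, π]. Then there exists t > 0 with (v_e² − v_p²)·t² − 2·d·v_e·cos(θ)·t + d² ≤ 0 if and only if v_e·sin(θ) ≤ v_p and θ < π/2. (This quadratic feasibility criterion is the algebraic content of the paper's interception lemma: a pursuer at distance d from the evader's starting point, at angle θ from the evader's direction of travel, can intercept the evader exactly when sin(θ) ≤ v_p/v_e and the angle is acute.) -/
open Real

/-- Quadratic feasibility criterion for interception: for `d > 0`, `0 < v_p < v_e`,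
`θ ∈ [0, π]`, there is `t > 0` with
`(v_e² − v_p²)·t² − 2·d·v_e·cos θ·t + d² ≤ 0` iff `v_e·sin θ ≤ v_p` and `θ < π/2`. -/
theorem interception_quadratic_feasible (d vp ve θ : ℝ) (hd : 0 < d)
    (hvp : 0 < vp) (hv : vp < ve) (hθ : θ ∈ Set.Icc 0 Real.pi) :
    (∃ t > 0, (ve ^ 2 - vp ^ 2) * t ^ 2 - 2 * d * ve * Real.cos θ * t + d ^ 2 ≤ 0) ↔
      (ve * Real.sin θ ≤ vp ∧ θ < Real.pi / 2) := by
  obtain ⟨hθ0, hθπ⟩ := hθ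
  have hve : 0 < ve := hvp.trans hv
  have ha : 0 < ve ^ 2 - vp ^ 2 := by nlinarith
  have hs : 0 ≤ Real.sin θ := Real.sin_nonneg_of_nonneg_of_le_pi hθ0 hθπ
  have hpyth : Real.sin θ ^ 2 + Real.cos θ ^ 2 = 1 := Real.sin_sq_add_cos_sq θ
  constructor
  · rintro ⟨t, ht, hft⟩
    have hcos : 0 < Real.cos θ := by
      by_contra h
      push_neg at h
      have h1 : 2 * d * ve * Real.cos θ * t ≤ 0 := by
        have h2 : 0 < 2 * d * ve * t := by positivity
        nlinarith
      nlinarith [mul_pos ha (mul_pos ht ht), sq_nonneg t]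
    have hlt : θ < Real.pi / 2 := by
      by_contra h
      push_neg at h
      have := Real.cos_nonpos_of_pi_div_two_le_of_le h (by linarith [Real.pi_pos])
      linarith
    refine ⟨?_, hlt⟩
    have hsqrt : Real.sqrt (ve ^ 2 - vp ^ 2) * t * d ≤ d * ve * Real.cos θ * t := by
      nlinarith [sq_nonneg (Real.sqrt (ve ^ 2 - vp ^ 2) * t - d),
        Real.sq_sqrt ha.le, Real.sqrt_nonneg (ve ^ 2 - vp ^ 2)]
    have h1 : Real.sqrt (ve ^ 2 - vp ^ 2) * d ≤ d * ve * Real.cos θ := by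
      nlinarith
    have h2 : Real.sqrt (ve ^ 2 - vp ^ 2) ≤ ve * Real.cos θ := by
      have := (mul_le_mul_iff_of_pos_right hd).mp (by linarith : Real.sqrt (ve ^ 2 - vp ^ 2) * d ≤ ve * Real.cos θ * d)
      linarith
    have h3 : ve ^ 2 - vp ^ 2 ≤ (ve * Real.cos θ) ^ 2 := by
      nlinarith [mul_self_le_mul_self (Real.sqrt_nonneg (ve ^ 2 - vp ^ 2)) h2,
        Real.sq_sqrt ha.le]
    have hsq : ve ^ 2 * Real.sin θ ^ 2 ≤ vp ^ 2 := by nlinarith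
    nlinarith [mul_nonneg hve.le hs]
  · rintro ⟨hvs, hlt⟩
    have hcos : 0 < Real.cos θ := Real.cos_pos_of_mem_Ioo ⟨by linarith [Real.pi_pos], hlt⟩
    set a := ve ^ 2 - vp ^ 2 with hadef
    refine ⟨d * ve * Real.cos θ / a, by positivity, ?_⟩
    set t := d * ve * Real.cos θ / a with htdef
    have ht : 0 < t := by positivity
    have hat : a * t = d * ve * Real.cos θ := by
      rw [htdef]; field_simp
    have hat2 : a * t ^ 2 = d * ve * Real.cos θ * t := by
      rw [pow_two, ← mul_assoc, hat]
    have hkey : ve ^ 2 * Real.sin θ ^ 2 ≤ vp ^ 2 := by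
      nlinarith [mul_nonneg hve.le hs]
    have hbt : d ^ 2 ≤ d * ve * Real.cos θ * t := by
      have hrw : d * ve * Real.cos θ * (d * ve * Real.cos θ / a)
          = (d * ve * Real.cos θ) ^ 2 / a := by ring
      rw [htdef, hrw, le_div_iff₀ ha]
      have h4 : a ≤ ve ^ 2 * Real.cos θ ^ 2 := by rw [hadef]; nlinarith
      calc d ^ 2 * a ≤ d ^ 2 * (ve ^ 2 * Real.cos θ ^ 2) :=
            mul_le_mul_of_nonneg_left h4 (sq_nonneg d)
        _ = (d * ve * Real.cos θ) ^ 2 := by ring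
    linarith [hat2, hbt]
end

section
/- Let P and R be points of the Euclidean plane ℝ² with R ≠ P, let u be a unit vector in ℝ², and let v_p, v_e be real numbers with 0 < v_p < v_e. Then there exists t > 0 such that dist(R, P + (v_e·t) • u) ≤ v_p·t if and only if the unoriented angle between the vectors u and R − P is at most arcsin(v_p/v_e). (This is the paper's interception lemma: a pursuer at R with speed v_p can intercept an evader that starts at P and moves with speed v_e in direction u exactly when the pursuer's direction from P makes an angle θ with u satisfying sin(θ) ≤ v_p/v_e, with θ acute.) -/
set_option maxHeartbeats 1000000


open Real

/-- Interception lemma: a pursuer at `R` with speed `v_p` can intercept an evader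
starting at `P` moving with speed `v_e` in unit direction `u` iff the unoriented angle
between `u` and `R − P` is at most `arcsin (v_p / v_e)`. -/
theorem interception_iff_angle_le_arcsin (P R : EuclideanSpace ℝ (Fin 2)) (hRP : R ≠ P)
    (u : EuclideanSpace ℝ (Fin 2)) (hu : ‖u‖ = 1) (vp ve : ℝ)
    (hvp : 0 < vp) (hv : vp < ve) :
    (∃ t > 0, dist R (P + (ve * t) • u) ≤ vp * t) ↔
      InnerProductGeometry.angle u (R - P) ≤ Real.arcsin (vp / ve) := by
  have hve : 0 < ve := hvp.trans hv
  set w := R - P with hw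
  have hd : 0 < ‖w‖ := by
    rw [hw, norm_pos_iff, sub_ne_zero]; exact hRP
  set d := ‖w‖ with hdd
  set ip : ℝ := inner ℝ u w with hipdef
  have hk0 : 0 < vp / ve := div_pos hvp hve
  have hk1 : vp / ve < 1 := (div_lt_one hve).2 hv
  have h1k : 0 < 1 - (vp / ve) ^ 2 := by nlinarith
  set b := Real.sqrt (1 - (vp / ve) ^ 2) with hbdef
  have hb0 : 0 < b := Real.sqrt_pos.2 h1k
  have hb2 : b ^ 2 = 1 - (vp / ve) ^ 2 := Real.sq_sqrt h1k.le
  have hA : 0 < ve ^ 2 - vp ^ 2 := by nlinarith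
  have hbve : b ^ 2 * ve ^ 2 = ve ^ 2 - vp ^ 2 := by
    rw [hb2]; field_simp
  have hcos : Real.cos (InnerProductGeometry.angle u w) = ip / d := by
    rw [InnerProductGeometry.cos_angle, hu, one_mul]
  have hexp : ∀ s : ℝ, ‖w - s • u‖ ^ 2 = d ^ 2 - 2 * (s * ip) + s ^ 2 := by
    intro s
    rw [norm_sub_sq_real, real_inner_smul_right, real_inner_comm, norm_smul, hu, mul_one,
      Real.norm_eq_abs, sq_abs]
  have hdist : ∀ s : ℝ, dist R (P + s • u) = ‖w - s • u‖ := by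
    intro s
    rw [dist_eq_norm, sub_add_eq_sub_sub, hw]
  have key : (∃ t > 0, dist R (P + (ve * t) • u) ≤ vp * t) ↔ b * d ≤ ip := by
    constructor
    · rintro ⟨t, ht, hle⟩
      rw [hdist] at hle
      have hsq := pow_le_pow_left₀ (norm_nonneg _) hle 2
      rw [hexp] at hsq
      have heq : b ^ 2 * ve ^ 2 * t ^ 2 = (ve ^ 2 - vp ^ 2) * t ^ 2 := by rw [hbve]
      nlinarith [sq_nonneg (d - b * ve * t), heq, mul_pos hve ht]
    · intro hbd
      have hip0 : 0 < ip := lt_of_lt_of_le (mul_pos hb0 hd) hbd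
      have heqd : b ^ 2 * (ve ^ 2 * d ^ 2) = (ve ^ 2 - vp ^ 2) * d ^ 2 := by
        rw [← hbve]; ring
      have hQ : (ve ^ 2 - vp ^ 2) * d ^ 2 ≤ ve ^ 2 * ip ^ 2 := by
        nlinarith [mul_nonneg (sub_nonneg.2 hbd)
          (add_nonneg hip0.le (mul_nonneg hb0.le hd.le)), heqd, sq_nonneg ve]
      refine ⟨ip * ve / (ve ^ 2 - vp ^ 2), div_pos (mul_pos hip0 hve) hA, ?_⟩
      rw [hdist]
      set t := ip * ve / (ve ^ 2 - vp ^ 2) with htdef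
      have ht0 : 0 < t := div_pos (mul_pos hip0 hve) hA
      have hts : (ve ^ 2 - vp ^ 2) * t = ip * ve := by
        rw [htdef]; field_simp
      have h6 : ((ve ^ 2 - vp ^ 2) * t) ^ 2 = ip ^ 2 * ve ^ 2 := by rw [hts]; ring
      have h9 : (ve ^ 2 - vp ^ 2) * ((ve ^ 2 - vp ^ 2) * t ^ 2) = ip ^ 2 * ve ^ 2 := by
        rw [← h6]; ring
      have h10 : (ve ^ 2 - vp ^ 2) * d ^ 2 ≤ (ve ^ 2 - vp ^ 2) * ((ve ^ 2 - vp ^ 2) * t ^ 2) := by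
        rw [h9]; linarith [hQ]
      have h7 : d ^ 2 ≤ (ve ^ 2 - vp ^ 2) * t ^ 2 := le_of_mul_le_mul_left h10 hA
      have h8 : ve * ip * t = (ve ^ 2 - vp ^ 2) * t ^ 2 := by
        have := congrArg (· * t) hts
        linarith [this]
      have h2 : ‖w - (ve * t) • u‖ ^ 2 ≤ (vp * t) ^ 2 := by
        rw [hexp]
        nlinarith [h7, h8]
      have h3 := Real.sqrt_le_sqrt h2
      rwa [Real.sqrt_sq (norm_nonneg _), Real.sqrt_sq (mul_pos hvp ht0).le] at h3
  rw [key]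
  have hθ0 := InnerProductGeometry.angle_nonneg u w
  have hθπ := InnerProductGeometry.angle_le_pi u w
  have har0 : 0 ≤ Real.arcsin (vp / ve) := Real.arcsin_nonneg.2 hk0.le
  have harπ : Real.arcsin (vp / ve) ≤ π := by
    have := Real.arcsin_le_pi_div_two (vp / ve)
    linarith [Real.pi_pos]
  have hcosar : Real.cos (Real.arcsin (vp / ve)) = b := Real.cos_arcsin _
  constructor
  · intro hbd
    by_contra hlt
    push_neg at hlt
    have hc := Real.cos_lt_cos_of_nonneg_of_le_pi har0 hθπ hlt
    rw [hcos, hcosar] at hc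
    have : b ≤ ip / d := (le_div_iff₀ hd).2 hbd
    linarith
  · intro h
    have hc := Real.cos_le_cos_of_nonneg_of_le_pi hθ0 harπ h
    rw [hcos, hcosar] at hc
    exact (le_div_iff₀ hd).1 hc
end

section
/- Let P be a point of the Euclidean plane ℝ², let u be a unit vector in ℝ², and let v_p, v_e be real numbers with 0 < v_p < v_e. Then the interception region { R ∈ ℝ² : ∃ t ≥ 0, dist(R, P + (v_e·t) • u) ≤ v_p·t } is equal to the cone { R ∈ ℝ² : √(1 − (v_p/v_e)²) · ‖R − P‖ ≤ ⟪R − P, u⟫ }. (This makes precise the paper's claim that the region from which a pursuer can block a straight-line lane is a cone whose apex is the state from which the evader starts, with half-angle arcsin(v_p/v_e).) -/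
open Real

/-- The interception region of a straight-line lane is a cone with apex `P` and
half-angle `arcsin (v_p / v_e)`. -/
theorem interception_region_eq_cone (P u : EuclideanSpace ℝ (Fin 2)) (hu : ‖u‖ = 1)
    (vp ve : ℝ) (hvp : 0 < vp) (hv : vp < ve) :
    {R : EuclideanSpace ℝ (Fin 2) | ∃ t ≥ 0, dist R (P + (ve * t) • u) ≤ vp * t} =
      {R : EuclideanSpace ℝ (Fin 2) |
        Real.sqrt (1 - (vp / ve) ^ 2) * ‖R - P‖ ≤ (inner ℝ (R - P) u : ℝ)} := by
  have hve : 0 < ve := hvp.trans hv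
  have hk1 : vp / ve < 1 := (div_lt_one hve).2 hv
  have hk0 : 0 < vp / ve := div_pos hvp hve
  have hk2 : 0 < 1 - (vp / ve) ^ 2 := by nlinarith
  set k2 : ℝ := 1 - (vp / ve) ^ 2 with hk2def
  have hvk : (vp / ve) ^ 2 = 1 - k2 := by rw [hk2def]; ring
  set a : ℝ := Real.sqrt k2 with hadef
  have ha2 : a ^ 2 = k2 := Real.sq_sqrt hk2.le
  have ha0 : 0 ≤ a := Real.sqrt_nonneg _
  ext R
  simp only [Set.mem_setOf_eq]
  set x := R - P with hx
  set c : ℝ := (inner ℝ x u : ℝ) with hc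
  set n : ℝ := ‖x‖ with hn
  have hn0 : 0 ≤ n := norm_nonneg _
  have hdist : ∀ s : ℝ, dist R (P + s • u) = ‖x - s • u‖ := by
    intro s
    rw [dist_eq_norm, hx, sub_add_eq_sub_sub]
  have hexp : ∀ s : ℝ, ‖x - s • u‖ ^ 2 = n ^ 2 - 2 * s * c + s ^ 2 := by
    intro s
    rw [norm_sub_sq_real, real_inner_smul_right, norm_smul, hu]
    simp [mul_pow, sq_abs, ← hc, ← hn]
    ring
  clear_value k2 a c n x
  constructor
  · rintro ⟨t, ht, hle⟩
    rw [hdist] at hle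
    have hsq : ‖x - (ve * t) • u‖ ^ 2 ≤ (vp * t) ^ 2 :=
      pow_le_pow_left₀ (norm_nonneg _) hle 2
    rw [hexp] at hsq
    have hvpt : (vp * t) ^ 2 = (vp / ve) ^ 2 * (ve * t) ^ 2 := by
      field_simp
    have hq : k2 * (ve * t) ^ 2 - 2 * (ve * t) * c + n ^ 2 ≤ 0 := by
      rw [hk2def]; nlinarith [hsq, hvpt]
    set s : ℝ := ve * t with hsdef
    have hs : 0 ≤ s := mul_nonneg hve.le ht
    rcases eq_or_lt_of_le hn0 with hn0' | hnpos
    · -- n = 0, so x = 0, so c = 0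
      have hx0 : x = 0 := by rw [← norm_eq_zero, ← hn, ← hn0']
      have hc0 : c = 0 := by rw [hc, hx0, inner_zero_left]
      rw [hc0, ← hn0']
      simp
    · have hspos : 0 < s := by
        rcases eq_or_lt_of_le hs with hs0 | hspos
        · exfalso
          rw [← hs0] at hq
          nlinarith [hq]
        · exact hspos
      nlinarith [sq_nonneg (a * s - n), hq, ha2, hspos]
  · intro h
    have hc0 : 0 ≤ c := le_trans (mul_nonneg ha0 hn0) h
    refine ⟨c / (k2 * ve), div_nonneg hc0 (by positivity), ?_⟩
    have hsv : ve * (c / (k2 * ve)) = c / k2 := by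
      field_simp
    rw [hdist, hsv]
    have hcc : k2 * n ^ 2 ≤ c ^ 2 := by
      have h2 : (a * n) * (a * n) ≤ c * c := mul_self_le_mul_self (mul_nonneg ha0 hn0) h
      calc k2 * n ^ 2 = (a * n) * (a * n) := by rw [← ha2]; ring
        _ ≤ c * c := h2
        _ = c ^ 2 := by ring
    have h1 : vp * (c / (k2 * ve)) = (vp / ve) * (c / k2) := by ring
    have hkey : ((vp / ve) * (c / k2)) ^ 2 - (n ^ 2 - 2 * (c / k2) * c + (c / k2) ^ 2)
        = c ^ 2 / k2 - n ^ 2 := by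
      rw [mul_pow, hvk]; field_simp; ring
    have hdiv : n ^ 2 ≤ c ^ 2 / k2 := (le_div_iff₀ hk2).2 (by linarith [hcc])
    have hgoal2 : ‖x - (c / k2) • u‖ ^ 2 ≤ (vp * (c / (k2 * ve))) ^ 2 := by
      rw [hexp, h1]
      linarith [hkey, hdiv]
    exact le_of_pow_le_pow_left₀ two_ne_zero (by positivity) hgoal2
end

section
/- Let n ≥ 3 be a natural number and, for 0 ≤ k ≤ n−1, let p_k = exp(2πik/n) ∈ ℂ be the n-th roots of unity, viewed as the vertices of a regular n-gon on the unit circle in the Euclidean plane ℂ. Then for every j with 1 ≤ j ≤ n−2, the unoriented angle ∠ p_j p_0 p_{j+1} at the vertex p_0 between the directions toward p_j and toward p_{j+1} equals π/n. (This is the paper's claim that when the states are placed equidistantly on a circle, the angle between adjacent moving directions of the evader at any state is π/n.) -/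
open EuclideanGeometry Real
open scoped RealInnerProductSpace

lemma exp_two_mul_I_sub_one (x : ℝ) :
    Complex.exp (2 * x * Complex.I) - 1 =
      (2 * Real.sin x) • (Complex.I * Complex.exp (x * Complex.I)) := by
  have h2 : (2 * (x:ℂ) * Complex.I) = x * Complex.I + x * Complex.I := by ring
  rw [h2, Complex.exp_add, Complex.exp_mul_I]
  have hs : (Real.sin x : ℂ) = Complex.sin x := by simp
  have := Complex.sin_sq_add_cos_sq (x : ℂ)
  simp only [Complex.real_smul, Complex.ofReal_mul, Complex.ofReal_ofNat, hs]
  linear_combination this - Complex.sin (x:ℂ) ^ 2 * Complex.I_sq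

/-- For the vertices `p k = exp(2πik/n)` of a regular `n`-gon on the unit circle in `ℂ`,
the unoriented angle at `p 0` between the directions toward `p j` and `p (j+1)` is `π/n`,
for `1 ≤ j ≤ n − 2`. -/
theorem angle_adjacent_directions_regular_ngon (n : ℕ) (hn : 3 ≤ n)
    (p : ℕ → ℂ) (hp : ∀ k, p k = Complex.exp (2 * Real.pi * Complex.I * k / n))
    (j : ℕ) (hj1 : 1 ≤ j) (hj2 : j ≤ n - 2) :
    ∠ (p j) (p 0) (p (j + 1)) = Real.pi / n := by
  have hn0 : (0:ℝ) < n := by positivity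
  have key : ∀ k : ℕ, p k - p 0 =
      (2 * Real.sin (Real.pi * k / n)) • (Complex.I * Complex.exp ((Real.pi * k / n : ℝ) * Complex.I)) := by
    intro k
    rw [hp, hp]
    have h0 : Complex.exp (2 * Real.pi * Complex.I * (0:ℕ) / n) = 1 := by simp
    rw [h0]
    have : (2 * (Real.pi:ℂ) * Complex.I * (k:ℕ) / (n:ℕ)) =
        2 * ((Real.pi * k / n : ℝ) : ℂ) * Complex.I := by
      push_cast
      ring
    rw [this, exp_two_mul_I_sub_one]
  -- bounds
  have hjn : (j:ℝ) < n := by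
    have : j < n := by omega
    exact_mod_cast this
  have hj1n : ((j:ℝ) + 1) < n := by
    have : j + 1 < n := by omega
    exact_mod_cast (by exact_mod_cast this : ((j+1:ℕ):ℝ) < n)
  have hsj : 0 < Real.sin (Real.pi * j / n) := by
    apply Real.sin_pos_of_pos_of_lt_pi
    · have : (0:ℝ) < j := by exact_mod_cast hj1
      positivity
    · rw [div_lt_iff₀ hn0]
      nlinarith [Real.pi_pos]
  have hsj1 : 0 < Real.sin (Real.pi * (j+1) / n) := by
    apply Real.sin_pos_of_pos_of_lt_pi
    · positivity
    · rw [div_lt_iff₀ hn0]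
      nlinarith [Real.pi_pos]
  have hcast : ((j+1:ℕ):ℝ) = (j:ℝ) + 1 := by push_cast; ring
  rw [EuclideanGeometry.angle, vsub_eq_sub, vsub_eq_sub, key j, key (j+1), hcast]
  rw [InnerProductGeometry.angle_smul_left_of_pos _ _ (by positivity),
    InnerProductGeometry.angle_smul_right_of_pos _ _ (by positivity)]
  set a : ℝ := Real.pi * j / n
  set b : ℝ := Real.pi * (j+1) / n
  have hna : ‖Complex.I * Complex.exp ((a:ℝ) * Complex.I)‖ = 1 := by
    simp
  have hnb : ‖Complex.I * Complex.exp ((b:ℝ) * Complex.I)‖ = 1 := by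
    simp
  have hinner : (inner ℝ (Complex.I * Complex.exp ((a:ℝ) * Complex.I))
      (Complex.I * Complex.exp ((b:ℝ) * Complex.I)) : ℝ) = Real.cos (b - a) := by
    rw [Complex.inner, mul_comm (Complex.I * Complex.exp ((b:ℝ) * Complex.I))]
    have : (starRingEnd ℂ) (Complex.I * Complex.exp ((a:ℝ) * Complex.I)) *
        (Complex.I * Complex.exp ((b:ℝ) * Complex.I)) = Complex.exp (((b - a : ℝ)) * Complex.I) := by
      rw [map_mul, ← Complex.exp_conj, Complex.conj_I]
      rw [show ((a:ℝ):ℂ) * Complex.I = (a:ℂ) * Complex.I from rfl]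
      rw [show (starRingEnd ℂ) ((a:ℂ) * Complex.I) = -(a:ℂ) * Complex.I by
        rw [map_mul, Complex.conj_I, Complex.conj_ofReal]; ring]
      rw [show ((b - a : ℝ):ℂ) * Complex.I = (b:ℂ)*Complex.I + (-(a:ℂ))*Complex.I by push_cast; ring,
        Complex.exp_add]
      ring_nf
      rw [Complex.I_sq]
      ring
    rw [this, Complex.exp_ofReal_mul_I_re]
  rw [InnerProductGeometry.angle, hinner, hna, hnb]
  have hba : b - a = Real.pi / n := by
    simp only [a, b]; field_simp; ring
  rw [hba]
  norm_num
  exact Real.arccos_cos (by positivity) (by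
    apply div_le_self Real.pi_pos.le
    exact_mod_cast (by omega : 1 ≤ n))
end

section
/- For every natural number n with n ≥ 7, one has 1/(2·sin(π/(2n))) − sin(π/(2n)) > 1. (This inequality is the crux of the paper's lemma that when n states are evenly placed on a circle and each pursuer has speed exactly v_e·sin(π/(2n)) — just sufficient to block a single state — the pursuers cannot win for n ≥ 7: the required formation-transition condition sin(γ) ≥ 1/(2·sin(π/(2n))) − sin(π/(2n)) is infeasible because the right-hand side exceeds 1.) -/
open Real

/-- For `n ≥ 7`, `1/(2·sin(π/(2n))) − sin(π/(2n)) > 1`. -/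
theorem formation_transition_infeasible (n : ℕ) (hn : 7 ≤ n) :
    1 / (2 * Real.sin (Real.pi / (2 * n))) - Real.sin (Real.pi / (2 * n)) > 1 := by
  have hn' : (14 : ℝ) ≤ 2 * n := by
    have : (7 : ℝ) ≤ n := by exact_mod_cast hn
    linarith
  have hx_pos : 0 < Real.pi / (2 * n) := by positivity
  have hx_le : Real.pi / (2 * n) ≤ Real.pi / 14 :=
    div_le_div_of_nonneg_left Real.pi_pos.le (by norm_num) hn'
  have hs_pos : 0 < Real.sin (Real.pi / (2 * n)) :=
    Real.sin_pos_of_pos_of_lt_pi hx_pos (by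
      calc Real.pi / (2 * n) ≤ Real.pi / 14 := hx_le
        _ < Real.pi := by linarith [Real.pi_pos])
  set s := Real.sin (Real.pi / (2 * n)) with hs
  have hs_le : s ≤ 0.225 := by
    have h1 : s ≤ Real.pi / (2 * n) := Real.sin_le hx_pos.le
    have h2 : Real.pi / 14 ≤ 3.15 / 14 := by
      have := Real.pi_lt_d2
      linarith
    nlinarith
  rw [gt_iff_lt, lt_sub_iff_add_lt, lt_div_iff₀ (by linarith : (0:ℝ) < 2 * s)]
  nlinarith
end
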